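/- Let p = [b_1^{a_1} ⋯ b_r^{a_r}] (b_1 ≥ ⋯ ≥ b_r) be an orthogonal partition of 2n in which every b_i is odd, so that 2n* = Σ_i a_i is even. Then with P := [p_1 p_1 (2n*−1) 1] one has the exact identity P^t = p^{+-}, i.e. P^t = [(b_1+1) b_1^{a_1−1} b_2^{a_2} ⋯ b_{r−1}^{a_{r−1}} b_r^{a_r−1} (b_r−1)]. -/

import Mathlib

namespace JiangWF

/-- `sCount p i` : the number of parts of `p` that are `≥ i`. -/
def sCount (p : Multiset ℕ) (i : ℕ) : ℕ := (p.filter (fun a => i ≤ a)).card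

/-- `rCount p i` : the number of parts of `p` equal to `i`. -/
def rCount (p : Multiset ℕ) (i : ℕ) : ℕ := p.count i

/-- The largest part of `p` (`0` for the empty partition). -/
def maxPart (p : Multiset ℕ) : ℕ := p.sup

/-- The smallest part of `p` (`0` for the empty partition). -/
noncomputable def minPart (p : Multiset ℕ) : ℕ := sInf {a : ℕ | a ∈ p}

/-- The transpose partition: its `i`-th part is `sCount p i`, for `1 ≤ i ≤ maxPart p`. -/
def transpose (p : Multiset ℕ) : Multiset ℕ :=
  (Multiset.range (maxPart p)).map fun i => sCount p (i + 1)

/-- The sum of the `m` largest parts of `p`. -/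
def topSum (p : Multiset ℕ) (m : ℕ) : ℕ :=
  ∑ i ∈ Finset.Icc 1 p.sum, min m (sCount p i)

/-- Dominance order: `domLE p q` means `p ≤ q`. -/
def domLE (p q : Multiset ℕ) : Prop := ∀ m, topSum p m ≤ topSum q m

/-- `p` is a partition of `N`: all parts positive, summing to `N`. -/
def IsPartitionOf (p : Multiset ℕ) (N : ℕ) : Prop := (∀ a ∈ p, 0 < a) ∧ p.sum = N

/-- Symplectic partition: every odd part occurs with even multiplicity. -/
def IsSymplectic (p : Multiset ℕ) : Prop := ∀ a, a % 2 = 1 → Even (p.count a)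

/-- Orthogonal partition: every even part occurs with even multiplicity. -/
def IsOrthogonal (p : Multiset ℕ) : Prop := ∀ a, a % 2 = 0 → Even (p.count a)

/-- `p^-`: decrease the smallest part by one (deleting it if it becomes `0`). -/
noncomputable def pMinus (p : Multiset ℕ) : Multiset ℕ :=
  if minPart p ≤ 1 then p.erase (minPart p)
  else (minPart p - 1) ::ₘ p.erase (minPart p)

/-- `p^+`: increase the largest part by one. -/
def pPlus (p : Multiset ℕ) : Multiset ℕ := (maxPart p + 1) ::ₘ p.erase (maxPart p)

/-- `p^{+-}`: increase the largest part by one and decrease the smallest by one. -/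
noncomputable def pPM (p : Multiset ℕ) : Multiset ℕ := pMinus (pPlus p)

/-- `p₁ = [⌊b_1/2⌋^{a_1} ⋯ ⌊b_r/2⌋^{a_r}]^t` (discarding zero entries before transposing). -/
def pOne (p : Multiset ℕ) : Multiset ℕ :=
  transpose ((p.map fun b => b / 2).filter fun x => 0 < x)

/-- `Σ_{i : b_i odd} a_i`: the number of odd parts of `p`. -/
def oddMult (p : Multiset ℕ) : ℕ := (p.filter fun a => a % 2 = 1).card

/-- `n* = ⌊(Σ_{i : b_i odd} a_i)/2⌋`. -/
def nStar (p : Multiset ℕ) : ℕ := oddMult p / 2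

/-- Append an extra part `m` to `q`, omitted if `m = 0`. -/
def addPart (m : ℕ) (q : Multiset ℕ) : Multiset ℕ := if m = 0 then q else m ::ₘ q

/-- `c` is the `Sp`-collapse of `p`: the maximal symplectic partition `≤ p` in dominance. -/
def IsSpCollapse (p c : Multiset ℕ) : Prop :=
  IsPartitionOf c p.sum ∧ IsSymplectic c ∧ domLE c p ∧
    ∀ c', IsPartitionOf c' p.sum → IsSymplectic c' → domLE c' p → domLE c' c

/-- `c` is the `SO`-collapse of `p`: the maximal orthogonal partition `≤ p` in dominance. -/
def IsSOCollapse (p c : Multiset ℕ) : Prop :=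
  IsPartitionOf c p.sum ∧ IsOrthogonal c ∧ domLE c p ∧
    ∀ c', IsPartitionOf c' p.sum → IsOrthogonal c' → domLE c' p → domLE c' c

/-- `e` is the `Sp`-expansion of `p`: the minimal special symplectic partition `≥ p`. -/
def IsSpExpansion (p e : Multiset ℕ) : Prop :=
  IsPartitionOf e p.sum ∧ IsSymplectic e ∧ IsSymplectic (transpose e) ∧ domLE p e ∧
    ∀ e', IsPartitionOf e' p.sum → IsSymplectic e' → IsSymplectic (transpose e') →
      domLE p e' → domLE e e'

/-- `e` is the `SO_{2n+1}`-expansion of `p`: the minimal special orthogonal partition `≥ p`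
(odd case: special means the transpose is orthogonal). -/
def IsSOOddExpansion (p e : Multiset ℕ) : Prop :=
  IsPartitionOf e p.sum ∧ IsOrthogonal e ∧ IsOrthogonal (transpose e) ∧ domLE p e ∧
    ∀ e', IsPartitionOf e' p.sum → IsOrthogonal e' → IsOrthogonal (transpose e') →
      domLE p e' → domLE e e'

/-- `e` is the `SO_{2n}`-expansion of `p`: the minimal special orthogonal partition `≥ p`
(even case: special means the transpose is symplectic). -/
def IsSOEvenExpansion (p e : Multiset ℕ) : Prop :=
  IsPartitionOf e p.sum ∧ IsOrthogonal e ∧ IsSymplectic (transpose e) ∧ domLE p e ∧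
    ∀ e', IsPartitionOf e' p.sum → IsOrthogonal e' → IsSymplectic (transpose e') →
      domLE p e' → domLE e e'

/-- `dim_C(q)` for a symplectic partition `q` of `2k`:
`2k² + k − (1/2)Σ s_i(q)² − (1/2)Σ_{i odd} r_i(q)` (note `2k² + k = (|q|² + |q|)/2`). -/
def dimC (p : Multiset ℕ) : ℚ :=
  ((p.sum : ℚ) ^ 2 + (p.sum : ℚ)) / 2
    - (∑ i ∈ Finset.Icc 1 p.sum, (sCount p i : ℚ) ^ 2) / 2
    - (∑ i ∈ Finset.Icc 1 p.sum, if i % 2 = 1 then (rCount p i : ℚ) else 0) / 2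

/-- `dim_B(q)` for an orthogonal partition `q` of `2k+1`:
`2k² + k − (1/2)Σ s_i(q)² + (1/2)Σ_{i odd} r_i(q)` (note `2k² + k = (|q|² − |q|)/2`). -/
def dimB (p : Multiset ℕ) : ℚ :=
  ((p.sum : ℚ) ^ 2 - (p.sum : ℚ)) / 2
    - (∑ i ∈ Finset.Icc 1 p.sum, (sCount p i : ℚ) ^ 2) / 2
    + (∑ i ∈ Finset.Icc 1 p.sum, if i % 2 = 1 then (rCount p i : ℚ) else 0) / 2

/-- `dim_D(q)` for an orthogonal partition `q` of `2k`:
`2k² − k − (1/2)Σ s_i(q)² + (1/2)Σ_{i odd} r_i(q)` (note `2k² − k = (|q|² − |q|)/2`). -/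
def dimD (p : Multiset ℕ) : ℚ :=
  ((p.sum : ℚ) ^ 2 - (p.sum : ℚ)) / 2
    - (∑ i ∈ Finset.Icc 1 p.sum, (sCount p i : ℚ) ^ 2) / 2
    + (∑ i ∈ Finset.Icc 1 p.sum, if i % 2 = 1 then (rCount p i : ℚ) else 0) / 2


/-! ### Auxiliary lemmas -/

lemma sCount_eq_countP (p : Multiset ℕ) (i : ℕ) :
    sCount p i = p.countP (fun a => i ≤ a) := by
  rw [sCount, ← Multiset.countP_eq_card_filter]

lemma sCount_cons (a : ℕ) (p : Multiset ℕ) (i : ℕ) :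
    sCount (a ::ₘ p) i = (if i ≤ a then 1 else 0) + sCount p i := by
  simp only [sCount_eq_countP, Multiset.countP_cons]
  omega

lemma sCount_add (p q : Multiset ℕ) (i : ℕ) :
    sCount (p + q) i = sCount p i + sCount q i := by
  simp [sCount_eq_countP, Multiset.countP_add]

lemma sCount_anti (p : Multiset ℕ) {i j : ℕ} (h : i ≤ j) :
    sCount p j ≤ sCount p i := by
  rw [sCount, sCount]
  exact Multiset.card_le_card
    (Multiset.monotone_filter_right p (fun b hb => le_trans h hb))

lemma sCount_le_card (p : Multiset ℕ) (i : ℕ) :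
    sCount p i ≤ Multiset.card p :=
  Multiset.card_le_card (Multiset.filter_le _ p)

lemma one_le_sCount_iff (p : Multiset ℕ) {i : ℕ} (hi : 1 ≤ i) :
    1 ≤ sCount p i ↔ i ≤ maxPart p := by
  constructor
  · intro h
    obtain ⟨a, ha⟩ := Multiset.card_pos_iff_exists_mem.mp h
    rw [Multiset.mem_filter] at ha
    exact le_trans ha.2 (Multiset.le_sup ha.1)
  · intro h
    by_contra h'
    have hz : sCount p i = 0 := by omega
    rw [sCount, Multiset.card_eq_zero, Multiset.filter_eq_nil] at hz
    have : p.sup ≤ i - 1 := Multiset.sup_le.mpr (fun b hb => by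
      have := hz b hb; omega)
    rw [maxPart] at h
    omega

lemma sCount_succ (p : Multiset ℕ) (i : ℕ) :
    sCount p i = p.count i + sCount p (i + 1) := by
  simp only [sCount_eq_countP]
  induction p using Multiset.induction_on with
  | empty => simp
  | cons a t ih =>
    simp only [Multiset.countP_cons, Multiset.count_cons, ih]
    split_ifs <;> omega

lemma ext_of_sCount {p q : Multiset ℕ} (h0p : (0 : ℕ) ∉ p) (h0q : (0 : ℕ) ∉ q)
    (h : ∀ i, 1 ≤ i → sCount p i = sCount q i) : p = q := by
  ext a
  rcases Nat.eq_zero_or_pos a with rfl | ha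
  · rw [Multiset.count_eq_zero_of_notMem h0p, Multiset.count_eq_zero_of_notMem h0q]
  · have h1 := sCount_succ p a
    have h2 := sCount_succ q a
    have h3 := h a ha
    have h4 := h (a + 1) (by omega)
    omega

lemma mem_of_downclosed {S : Finset ℕ} (hdc : ∀ a ∈ S, ∀ b, b ≤ a → b ∈ S)
    {i : ℕ} (hi : 1 ≤ i) (h : i ≤ S.card) : i - 1 ∈ S := by
  by_contra hmem
  have hsub : S ⊆ Finset.range (i - 1) := by
    intro a ha
    rw [Finset.mem_range]
    by_contra h'
    exact hmem (hdc a ha _ (by omega))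
  have := Finset.card_le_card hsub
  rw [Finset.card_range] at this
  omega

lemma sCount_transpose (X : Multiset ℕ) {i N : ℕ} (hi : 1 ≤ i) (hN : maxPart X ≤ N) :
    sCount (transpose X) i
      = ((Finset.range N).filter (fun j => i ≤ sCount X (j + 1))).card := by
  have h1 : sCount (transpose X) i
      = ((Finset.range (maxPart X)).filter (fun j => i ≤ sCount X (j + 1))).card := by
    rw [sCount_eq_countP, transpose, Multiset.countP_map]
    rfl
  have h2 : (Finset.range N).filter (fun j => i ≤ sCount X (j + 1))
      = (Finset.range (maxPart X)).filter (fun j => i ≤ sCount X (j + 1)) := by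
    ext j
    simp only [Finset.mem_filter, Finset.mem_range]
    constructor
    · rintro ⟨h1', h2'⟩
      have := (one_le_sCount_iff X (i := j + 1) (by omega)).mp (le_trans hi h2')
      exact ⟨by omega, h2'⟩
    · rintro ⟨h1', h2'⟩
      exact ⟨by omega, h2'⟩
  rw [h1, h2]

lemma gal (X : Multiset ℕ) {i j : ℕ} (hi : 1 ≤ i) (hj : 1 ≤ j) :
    i ≤ sCount (transpose X) j ↔ j ≤ sCount X i := by
  rw [sCount_transpose X hj (le_refl _)]
  set S := (Finset.range (maxPart X)).filter (fun t => j ≤ sCount X (t + 1)) with hS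
  have hdc : ∀ a ∈ S, ∀ b, b ≤ a → b ∈ S := by
    intro a ha b hb
    simp only [hS, Finset.mem_filter, Finset.mem_range] at ha ⊢
    exact ⟨by omega, le_trans ha.2 (sCount_anti X (by omega))⟩
  constructor
  · intro h
    have hm := mem_of_downclosed hdc hi h
    simp only [hS, Finset.mem_filter, Finset.mem_range] at hm
    have : i - 1 + 1 = i := by omega
    rw [this] at hm
    exact hm.2
  · intro h
    have hsub : Finset.range i ⊆ S := by
      intro t ht
      rw [Finset.mem_range] at ht
      simp only [hS, Finset.mem_filter, Finset.mem_range]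
      constructor
      · have := (one_le_sCount_iff X hi).mp (le_trans hj h)
        omega
      · exact le_trans h (sCount_anti X (by omega))
    calc i = (Finset.range i).card := (Finset.card_range i).symm
      _ ≤ S.card := Finset.card_le_card hsub

lemma star_sum (F : ℕ → ℕ) (heven : ∀ u, 1 ≤ u → F (2 * u) = F (2 * u + 1)) (j : ℕ) :
    ∀ N : ℕ, (∑ t ∈ Finset.range (2 * N + 1), if j ≤ F (t + 1) then 1 else 0)
      = (if j ≤ F 1 then 1 else 0)
        + 2 * ∑ t ∈ Finset.range N, if j ≤ F (2 * t + 2) then 1 else 0 := by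
  intro N
  induction N with
  | zero =>
    rw [show 2 * 0 + 1 = 1 from rfl, Finset.sum_range_one]
    simp
  | succ n ih =>
    have h1 : 2 * (n + 1) + 1 = (2 * n + 1) + 1 + 1 := by ring
    rw [h1, Finset.sum_range_succ, Finset.sum_range_succ,
      Finset.sum_range_succ (fun t => if j ≤ F (2 * t + 2) then 1 else 0) n, ih]
    have e1 : 2 * n + 1 + 1 + 1 = 2 * n + 3 := by ring
    have e2 : 2 * n + 1 + 1 = 2 * n + 2 := by ring
    rw [e1, e2]
    have e3 : F (2 * n + 3) = F (2 * n + 2) := by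
      have := heven (n + 1) (by omega)
      have e4 : 2 * (n + 1) = 2 * n + 2 := by ring
      rw [e4] at this
      have e6 : 2 * n + 2 + 1 = 2 * n + 3 := by ring
      rw [e6] at this
      omega
    rw [e3]
    ring

lemma zero_not_mem_transpose (X : Multiset ℕ) : (0 : ℕ) ∉ transpose X := by
  intro h
  rw [transpose] at h
  obtain ⟨t, ht, h0⟩ := Multiset.mem_map.mp h
  rw [Multiset.mem_range] at ht
  have := (one_le_sCount_iff X (i := t + 1) (by omega)).mpr (by omega)
  omega

lemma sum_mod_two : ∀ (s : Multiset ℕ), (∀ a ∈ s, a % 2 = 1) →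
    s.sum % 2 = Multiset.card s % 2 := by
  intro s
  induction s using Multiset.induction_on with
  | empty => intro; simp
  | cons a t ih =>
    intro h
    have ha := h a (Multiset.mem_cons_self a t)
    have ht := ih (fun b hb => h b (Multiset.mem_cons_of_mem hb))
    simp only [Multiset.sum_cons, Multiset.card_cons]
    omega

set_option maxHeartbeats 2000000 in
/-- `p` an orthogonal partition of `2n` all of whose parts are odd, so that
`2n* = Σ_i a_i` is even.  Then `P = [p₁ p₁ (2n*−1) 1]` satisfies `P^t = p^{+-}`. -/
theorem transpose_eq_pPM_of_odd_parts (n : ℕ) (p : Multiset ℕ) (hne : p ≠ 0)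
    (hp : IsPartitionOf p (2 * n)) (horth : IsOrthogonal p)
    (hodd : ∀ a ∈ p, a % 2 = 1) :
    Even (Multiset.card p) ∧ 2 * nStar p = Multiset.card p ∧
      transpose (addPart (2 * nStar p - 1) ((1 : ℕ) ::ₘ (pOne p + pOne p))) = pPM p := by
  obtain ⟨hpos, hsum⟩ := hp
  set k := Multiset.card p with hk
  have hmod := sum_mod_two p hodd
  have hk0 : k ≠ 0 := by
    intro h
    exact hne (Multiset.card_eq_zero.mp (by omega))
  have hkeven : k % 2 = 0 := by rw [hsum] at hmod; omega
  have hk2 : 2 ≤ k := by omega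
  have hoddmult : oddMult p = k := by
    rw [oddMult, Multiset.filter_eq_self.mpr hodd]
  have hnstar : 2 * nStar p = k := by
    rw [nStar, hoddmult]; omega
  refine ⟨Nat.even_iff.mpr hkeven, hnstar, ?_⟩
  set M := maxPart p with hM
  set m := minPart p with hm
  obtain ⟨a0, ha0⟩ := Multiset.exists_mem_of_ne_zero hne
  have hM1 : 1 ≤ M := le_trans (hpos a0 ha0) (Multiset.le_sup ha0)
  have hmmem : m ∈ p := by
    have hne' : {a : ℕ | a ∈ p}.Nonempty := ⟨a0, by exact ha0⟩
    have h' := Nat.sInf_mem hne'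
    rw [hm, minPart]
    exact h'
  have hmle : ∀ a ∈ p, m ≤ a := by
    intro a ha
    rw [hm, minPart]
    exact Nat.sInf_le (by exact ha)
  have hm1 : 1 ≤ m := hpos m hmmem
  have hmM : m ≤ M := Multiset.le_sup hmmem
  have hMmem : M ∈ p := by
    have h1 : 1 ≤ sCount p M := (one_le_sCount_iff p hM1).mpr le_rfl
    obtain ⟨a, ha⟩ := Multiset.card_pos_iff_exists_mem.mp h1
    rw [Multiset.mem_filter] at ha
    have h2 : a ≤ M := Multiset.le_sup ha.1
    have h3 : a = M := le_antisymm h2 ha.2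
    exact h3 ▸ ha.1
  have hF1 : sCount p 1 = k := by
    rw [sCount,
      show p.filter (fun a => 1 ≤ a) = p from Multiset.filter_eq_self.mpr (fun a ha => hpos a ha)]
  have heven : ∀ u, 1 ≤ u → sCount p (2 * u) = sCount p (2 * u + 1) := by
    intro u hu
    have hcnt : p.count (2 * u) = 0 := by
      apply Multiset.count_eq_zero_of_notMem
      intro hmem
      have := hodd _ hmem
      omega
    have := sCount_succ p (2 * u)
    omega
  have hf5 : ∀ i, (sCount p i = k ↔ i ≤ m) := by
    intro i
    constructor
    · intro h
      have hle : p.filter (fun a => i ≤ a) ≤ p := Multiset.filter_le _ p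
      have hcc : Multiset.card p ≤ Multiset.card (p.filter (fun a => i ≤ a)) := by
        rw [← sCount, h]
      have heq : p.filter (fun a => i ≤ a) = p := Multiset.eq_of_le_of_card_le hle hcc
      have hmm : m ∈ p.filter (fun a => i ≤ a) := by rw [heq]; exact hmmem
      exact (Multiset.mem_filter.mp hmm).2
    · intro h
      rw [sCount, show p.filter (fun a => i ≤ a) = p from
        Multiset.filter_eq_self.mpr (fun a ha => le_trans h (hmle a ha))]
  have hqM : maxPart ((p.map fun b => b / 2).filter fun x => 0 < x) ≤ M := by
    apply Multiset.sup_le.mpr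
    intro x hx
    rw [Multiset.mem_filter] at hx
    obtain ⟨b, hb, rfl⟩ := Multiset.mem_map.mp hx.1
    exact le_trans (Nat.div_le_self b 2) (Multiset.le_sup hb)
  have hLq : ∀ t : ℕ, sCount ((p.map fun b => b / 2).filter fun x => 0 < x) (t + 1)
      = sCount p (2 * t + 2) := by
    intro t
    rw [sCount_eq_countP, Multiset.countP_filter, Multiset.countP_map, sCount]
    congr 1
    apply Multiset.filter_congr
    intro b _
    constructor
    · intro h
      omega
    · intro h
      omega
  have hp1 : ∀ j', 1 ≤ j' → sCount (pOne p) j'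
      = ∑ t ∈ Finset.range M, if j' ≤ sCount p (2 * t + 2) then 1 else 0 := by
    intro j' hj'
    rw [pOne, sCount_transpose _ hj' hqM, Finset.card_filter]
    apply Finset.sum_congr rfl
    intro t _
    rw [hLq t]
  have hW : ∀ j', 1 ≤ j' → sCount (transpose p) j'
      = (if j' ≤ k then 1 else 0) + 2 * sCount (pOne p) j' := by
    intro j' hj'
    rw [sCount_transpose p hj' (show maxPart p ≤ 2 * M + 1 by omega), Finset.card_filter,
      star_sum (sCount p) heven j' M, hF1, hp1 j' hj']
  have hpp : pPlus p = (M + 1) ::ₘ p.erase M := by rw [hM, pPlus]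
  have hcons : p = M ::ₘ p.erase M := (Multiset.cons_erase hMmem).symm
  have hmemPP : m ∈ pPlus p := by
    rw [hpp]
    by_cases hmM' : m = M
    · have hall : ∀ b ∈ p, m = b := by
        intro b hb
        have h1 := hmle b hb
        have h2 : b ≤ M := Multiset.le_sup hb
        omega
      have hcnt : p.count m = k := Multiset.count_eq_card.mpr hall
      have hce : (p.erase M).count m = k - 1 := by
        rw [← hmM', Multiset.count_erase_self, hcnt]
      apply Multiset.mem_cons_of_mem
      rw [← Multiset.count_pos, hce]
      omega
    · exact Multiset.mem_cons_of_mem ((Multiset.mem_erase_of_ne hmM').mpr hmmem)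
  have hminPP : minPart (pPlus p) = m := by
    rw [minPart]
    apply le_antisymm
    · exact Nat.sInf_le hmemPP
    · apply le_csInf ⟨m, by exact hmemPP⟩
      intro b hb
      have hb' : b ∈ pPlus p := hb
      rw [hpp, Multiset.mem_cons] at hb'
      rcases hb' with rfl | hb'
      · omega
      · exact hmle b (Multiset.mem_of_mem_erase hb')
  have hID : ∀ i, 1 ≤ i →
      sCount (pPM p) i + ((if i ≤ m then 1 else 0) + (if i ≤ M then 1 else 0))
        = sCount p i + ((if i ≤ M + 1 then 1 else 0) + (if i ≤ m - 1 then 1 else 0)) := by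
    intro i hi
    have e1 : sCount p i = (if i ≤ M then 1 else 0) + sCount (p.erase M) i := by
      conv_lhs => rw [hcons]
      rw [sCount_cons]
    have e2 : sCount (pPlus p) i = (if i ≤ M + 1 then 1 else 0) + sCount (p.erase M) i := by
      rw [hpp, sCount_cons]
    have e3 : pPlus p = m ::ₘ (pPlus p).erase m := (Multiset.cons_erase hmemPP).symm
    have e4 : sCount (pPlus p) i = (if i ≤ m then 1 else 0) + sCount ((pPlus p).erase m) i := by
      conv_lhs => rw [e3]
      rw [sCount_cons]
    simp only [pPM, pMinus, hminPP]
    by_cases hm2 : m ≤ 1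
    · rw [if_pos hm2, if_neg (show ¬ (i ≤ m - 1) by omega)]
      split_ifs at e1 e2 e4 ⊢ <;> omega
    · rw [if_neg hm2, sCount_cons]
      split_ifs at e1 e2 e4 ⊢ <;> omega
  have h0pPM : (0 : ℕ) ∉ pPM p := by
    intro h0
    simp only [pPM, pMinus, hminPP] at h0
    have hmemp : ∀ b : ℕ, b ∈ (pPlus p).erase m → 0 < b := by
      intro b hb
      have hb2 := Multiset.mem_of_mem_erase hb
      rw [hpp, Multiset.mem_cons] at hb2
      rcases hb2 with rfl | hb'
      · omega
      · exact hpos b (Multiset.mem_of_mem_erase hb')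
    by_cases hm2 : m ≤ 1
    · rw [if_pos hm2] at h0
      exact absurd (hmemp 0 h0) (by omega)
    · rw [if_neg hm2, Multiset.mem_cons] at h0
      rcases h0 with h0 | h0
      · omega
      · exact absurd (hmemp 0 h0) (by omega)
  have hPdef : addPart (2 * nStar p - 1) ((1 : ℕ) ::ₘ (pOne p + pOne p))
      = (k - 1) ::ₘ (1 : ℕ) ::ₘ (pOne p + pOne p) := by
    have h' : 2 * nStar p - 1 = k - 1 := by omega
    rw [addPart, h', if_neg (show ¬ (k - 1 = 0) by omega)]
  rw [hPdef]
  set P := (k - 1) ::ₘ (1 : ℕ) ::ₘ (pOne p + pOne p) with hP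
  have hSP : ∀ j' : ℕ, sCount P j'
      = (if j' ≤ k - 1 then 1 else 0) + (if j' ≤ 1 then 1 else 0) + 2 * sCount (pOne p) j' := by
    intro j'
    rw [hP, sCount_cons, sCount_cons, sCount_add]
    ring
  apply ext_of_sCount (zero_not_mem_transpose P) h0pPM
  intro i hi
  set c := sCount (pPM p) i with hc
  have hcard : Multiset.card (pPM p) ≤ k := by
    have h3 : Multiset.card p = Multiset.card (p.erase M) + 1 := by
      conv_lhs => rw [← Multiset.cons_erase hMmem]
      rw [Multiset.card_cons]
    have h1 : Multiset.card (pPlus p) = k := by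
      rw [hpp, Multiset.card_cons]
      omega
    have h2 : Multiset.card (pPlus p) = Multiset.card ((pPlus p).erase m) + 1 := by
      conv_lhs => rw [← Multiset.cons_erase hmemPP]
      rw [Multiset.card_cons]
    simp only [pPM, pMinus, hminPP]
    split_ifs
    · omega
    · rw [Multiset.card_cons]
      omega
  have hck : c ≤ k := le_trans (sCount_le_card _ _) hcard
  set NP := maxPart P + k with hNP
  rw [sCount_transpose P hi (show maxPart P ≤ NP by omega)]
  have hpoint : ∀ j ∈ Finset.range NP, (i ≤ sCount P (j + 1)) ↔ (j + 1 ≤ c) := by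
    intro j _
    have hsp := hSP (j + 1)
    have hw := hW (j + 1) (by omega)
    have hg1 := gal p hi (show 1 ≤ j + 1 by omega)
    have hg2 := gal p (show 1 ≤ i + 1 by omega) (show 1 ≤ j + 1 by omega)
    have hg0 := gal p (show (1 : ℕ) ≤ 1 by omega) (show 1 ≤ j + 1 by omega)
    rw [hF1] at hg0
    have hid := hID i hi
    rw [← hc] at hid
    have hfa := one_le_sCount_iff p hi
    have hfa' := one_le_sCount_iff p (show 1 ≤ i + 1 by omega)
    have hf5i := hf5 i
    have hf5i' := hf5 (i + 1)
    have hmono := sCount_anti p (show i ≤ i + 1 by omega)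
    have hFk := sCount_le_card p i
    have hFk' := sCount_le_card p (i + 1)
    rw [← hk] at hFk hFk'
    by_cases hj0 : j = 0
    · subst hj0
      have hW1 : sCount (transpose p) 1 = M := by
        have hcardt : Multiset.card (transpose p) = M := by
          rw [transpose, Multiset.card_map, Multiset.card_range, ← hM]
        rw [sCount, Multiset.filter_eq_self.mpr ?_, hcardt]
        intro a ha
        have ha0' : a ≠ 0 := fun h => zero_not_mem_transpose p (h ▸ ha)
        omega
      rw [show (0 : ℕ) + 1 = 1 from rfl] at hsp hw ⊢
      rw [hW1] at hw
      split_ifs at hsp hw hid <;> omega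
    · split_ifs at hsp hw hid <;> omega
  rw [Finset.filter_congr hpoint]
  have hrange : (Finset.range NP).filter (fun j => j + 1 ≤ c) = Finset.range c := by
    ext t
    simp only [Finset.mem_filter, Finset.mem_range]
    omega
  rw [hrange, Finset.card_range]


end JiangWF
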